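/- Let ω be an infinite word over a finite set S of integers. The following are equivalent: (i) ω has bounded abelian complexity; (ii) for every non-erasing morphism φ assigning to each s ∈ S a nonempty finite integer word (over some finite integer alphabet), the infinite word φ(ω) = φ(ω(0))φ(ω(1))φ(ω(2))⋯ has bounded additive complexity. -/

import Mathlib

/-- `B` is a factor of the infinite word `ω`. -/
def Factor (ω : ℕ → ℤ) (B : List ℤ) : Prop :=
  ∃ m : ℕ, B = (List.range B.length).map (fun i => ω (m + i))

/-- `ω` has bounded additive complexity: there is `M` such that for every `n ≥ 1`
the set of sums of factors of length `n` has at most `M` elements. -/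
def BoundedAddComplexity (ω : ℕ → ℤ) : Prop :=
  ∃ M : ℕ, ∀ n : ℕ, 1 ≤ n →
    ∃ T : Finset ℤ, T.card ≤ M ∧
      ∀ B : List ℤ, Factor ω B → B.length = n → B.sum ∈ T

/-- The slope of a finite word. -/
def wordSlope (B : List ℤ) : ℚ := (B.sum : ℚ) / (B.length : ℚ)

/-- `ω` has slope `L`. -/
def HasSlope (ω : ℕ → ℤ) (L : ℝ) : Prop :=
  Filter.Tendsto (fun n : ℕ => (∑ i ∈ Finset.range n, (ω i : ℝ)) / n)
    Filter.atTop (nhds L)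

/-- ω has bounded abelian complexity: for every n ≥ 1 the factors of length n fall
into at most M abelian equivalence classes (classes = multisets of letters). -/
def BoundedAbelianComplexity (ω : ℕ → ℤ) : Prop :=
  ∃ M : ℕ, ∀ n : ℕ, 1 ≤ n →
    ∃ T : Finset (Multiset ℤ), T.card ≤ M ∧
      ∀ B : List ℤ, Factor ω B → B.length = n → (↑B : Multiset ℤ) ∈ T

/-- The image of the length-`n` prefix of ω under the morphism φ. -/
def phiPrefix (φ : ℤ → List ℤ) (ω : ℕ → ℤ) (n : ℕ) : List ℤ :=
  ((List.range n).map (fun i => φ (ω i))).flatten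

/-- ω' is the image of the infinite word ω under the morphism φ. -/
def IsImage (φ : ℤ → List ℤ) (ω ω' : ℕ → ℤ) : Prop :=
  ∀ n : ℕ, phiPrefix φ ω n = (List.range (phiPrefix φ ω n).length).map ω'

lemma ivt_discrete (f : ℕ → ℤ) (s : ℤ) (hs : ∀ i, |f (i+1) - f i| ≤ s)
    (y : ℤ) : ∀ b a, a ≤ b → f a ≤ y → y ≤ f b →
    ∃ i, a ≤ i ∧ i ≤ b ∧ |f i - y| ≤ s := by
  have hs0 : 0 ≤ s := le_trans (abs_nonneg _) (hs 0)
  intro b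
  induction b with
  | zero =>
      intro a ha h1 h2
      interval_cases a
      exact ⟨0, le_refl _, le_refl _, by rw [abs_le]; omega⟩
  | succ b ih =>
      intro a ha h1 h2
      rcases Nat.eq_or_lt_of_le ha with h | h
      · exact ⟨b+1, le_of_eq h, le_refl _, by rw [abs_le]; rw [h] at h1; omega⟩
      · have hab : a ≤ b := Nat.lt_succ_iff.mp h
        by_cases hyb : y ≤ f b
        · obtain ⟨i, h1, h2, h3⟩ := ih a hab h1 hyb
          exact ⟨i, h1, le_trans h2 (Nat.le_succ b), h3⟩
        · push_neg at hyb
          have := hs b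
          exact ⟨b, hab, Nat.le_succ b, by rw [abs_le] at this ⊢; omega⟩

lemma width_lemma (d : ℕ → ℤ) (K : ℤ) (hK : ∀ m, |d (m+1) - d m| ≤ K)
    (M : ℕ) (T : Finset ℤ) (hT : T.card ≤ M) (hmem : ∀ m, d m ∈ T) :
    ∀ a b, d b - d a ≤ M * (2*K+1) := by
  have hK0 : 0 ≤ K := le_trans (abs_nonneg _) (hK 0)
  intro a b
  by_contra hcon
  push_neg at hcon
  have hM0 : (0:ℤ) ≤ M * (2*K+1) := by positivity
  -- reach any intermediate value
  have key : ∀ t : ℕ, t ≤ M → ∃ z ∈ T, |z - (d a + t*(2*K+1))| ≤ K := by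
    intro t ht
    have hy1 : d a ≤ d a + t*(2*K+1) := by
      have : (0:ℤ) ≤ t * (2*K+1) := by positivity
      omega
    have hy2 : d a + t*(2*K+1) ≤ d b := by
      have : (t:ℤ) * (2*K+1) ≤ M * (2*K+1) := by
        apply mul_le_mul_of_nonneg_right _ (by omega)
        exact_mod_cast ht
      omega
    rcases le_total a b with hab | hab
    · obtain ⟨i, -, -, h3⟩ := ivt_discrete d K hK (d a + t*(2*K+1)) b a hab hy1 hy2
      exact ⟨d i, hmem i, h3⟩
    · have hs' : ∀ i, |(fun i => d (a - i)) (i+1) - (fun i => d (a - i)) i| ≤ K := by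
        intro i
        by_cases hia : i < a
        · have : a - (i+1) + 1 = a - i := by omega
          calc |d (a - (i+1)) - d (a - i)| = |d (a - (i+1) + 1) - d (a-(i+1))| := by
                rw [this, abs_sub_comm]
            _ ≤ K := hK _
        · have h1 : a - (i+1) = a - i := by omega
          simp [h1, hK0]
      obtain ⟨i, -, -, h3⟩ := ivt_discrete (fun i => d (a - i)) K hs' (d a + t*(2*K+1)) (a - b) 0
        (Nat.zero_le _) (by simpa using hy1) (by simpa [Nat.sub_sub_self hab] using hy2)
      exact ⟨d (a - i), hmem _, h3⟩
  classical
  let z : ℕ → ℤ := fun t => if h : t ≤ M then (key t h).choose else 0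
  have hz : ∀ t ≤ M, z t ∈ T ∧ |z t - (d a + t*(2*K+1))| ≤ K := by
    intro t ht
    simp only [z, dif_pos ht]
    exact ⟨(key t ht).choose_spec.1, (key t ht).choose_spec.2⟩
  have hinj : Set.InjOn z (Finset.range (M+1)) := by
    intro t ht t' ht' heq
    simp only [Finset.coe_range, Set.mem_Iio] at ht ht'
    by_contra hne
    have h1 := (hz t (by omega)).2
    have h2 := (hz t' (by omega)).2
    rw [abs_le] at h1 h2
    have : (t:ℤ) ≠ (t':ℤ) := by exact_mod_cast hne
    have htt : 1 ≤ |(t:ℤ) - t'| := by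
      rcases lt_or_gt_of_ne this with h | h
      · rw [abs_sub_comm, abs_of_pos (by omega)]; omega
      · rw [abs_of_pos (by omega)]; omega
    have : |(t:ℤ) - t'| * (2*K+1) ≤ |z t - z t'| + 2*K := by
      have expand : (t:ℤ)*(2*K+1) - t'*(2*K+1) = ((t:ℤ) - t')*(2*K+1) := by ring
      rw [heq] at h1
      rcases le_or_gt ((t:ℤ)) t' with h | h
      · rw [abs_sub_comm, abs_of_nonneg (by omega)]
        have := abs_nonneg (z t - z t')
        have hzz : -(|z t - z t'|) ≤ z t - z t' := neg_abs_le _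
        nlinarith [abs_nonneg (z t - z t')]
      · rw [abs_of_pos (by omega)]
        have hzz : z t - z t' ≤ |z t - z t'| := le_abs_self _
        nlinarith
    have hfin : 2*K+1 ≤ |z t - z t'| + 2*K := by nlinarith
    rw [heq, sub_self, abs_zero] at hfin
    omega
  have hcard : M + 1 ≤ T.card := by
    have := Finset.card_le_card_of_injOn z (fun t ht => by
      simp only [Finset.mem_coe, Finset.mem_range] at ht
      exact (hz t (by omega)).1) hinj
    simpa using this
  omega

lemma quasi (h : ℕ → ℤ) (M : ℕ) (K : ℤ)
    (hstep : ∀ m, |h (m+1) - h m| ≤ K)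
    (hcard : ∀ r : ℕ, 1 ≤ r → ∃ T : Finset ℤ, T.card ≤ M ∧ ∀ m, h (m+r) - h m ∈ T) :
    ∃ μ : ℝ, ∀ m r : ℕ, |((h (m+r) - h m : ℤ) : ℝ) - μ * r| ≤ 2 * ((M * (4*K+1) : ℤ) : ℝ) := by
  have hK0 : 0 ≤ K := le_trans (abs_nonneg _) (hstep 0)
  set C0 : ℤ := M * (4*K+1) with hC0def
  have hC00 : 0 ≤ C0 := by positivity
  set b : ℕ → ℤ := fun r => h r - h 0 with hbdef
  -- step 1: uniform approximation of differences by b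
  have hA : ∀ m r : ℕ, |h (m+r) - h m - b r| ≤ C0 := by
    intro m r
    rcases Nat.eq_zero_or_pos r with hr | hr
    · subst hr; simp [hbdef]; positivity
    · obtain ⟨T, hT, hmem⟩ := hcard r hr
      set d : ℕ → ℤ := fun j => h (j+r) - h j with hddef
      have hstep' : ∀ j, |d (j+1) - d j| ≤ 2*K := by
        intro j
        have h1 := hstep (j+r)
        have h2 := hstep j
        have e : j + 1 + r = j + r + 1 := by omega
        show |(h (j+1+r) - h (j+1)) - (h (j+r) - h j)| ≤ 2*K
        rw [e]
        rw [abs_le] at h1 h2 ⊢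
        omega
      have w1 : d 0 - d m ≤ M * (2*(2*K)+1) := width_lemma d (2*K) hstep' M T hT hmem m 0
      have w2 : d m - d 0 ≤ M * (2*(2*K)+1) := width_lemma d (2*K) hstep' M T hT hmem 0 m
      have e4 : (M:ℤ) * (2*(2*K)+1) = M*(4*K+1) := by ring
      have hdm : d m = h (m+r) - h m := rfl
      have hd0 : d 0 = b r := by simp [hbdef, hddef]
      rw [e4] at w1 w2
      rw [abs_le]
      rw [hdm, hd0] at w1 w2
      omega
  have hb0 : b 0 = 0 := by simp [hbdef]
  -- step 2: quasimorphism property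
  have hQ : ∀ r s : ℕ, |b (r+s) - b r - b s| ≤ C0 := by
    intro r s
    have := hA s r
    have e : b (r+s) - b r - b s = h (s+r) - h s - b r := by
      simp only [hbdef]; rw [Nat.add_comm r s]; ring
    rw [e]; exact this
  -- step 3: |b (s*r) - s * b r| ≤ s * C0
  have hmul : ∀ s r : ℕ, |b (s*r) - s * b r| ≤ s * C0 := by
    intro s r
    induction s with
    | zero => simp [hb0]
    | succ s ih =>
        have h1 := hQ (s*r) r
        have e : (s+1) * r = s*r + r := by ring
        rw [e]
        rw [abs_le] at ih h1 ⊢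
        push_cast at ih h1 ⊢
        constructor <;> nlinarith
  -- step 4: the sequence u r = b (r+1) / (r+1) is Cauchy
  set u : ℕ → ℝ := fun r => (b (r+1) : ℝ) / (r+1) with hudef
  have hu : ∀ r s : ℕ, |u r - u s| ≤ (C0:ℝ)/(r+1) + (C0:ℝ)/(s+1) := by
    have key : ∀ r s : ℕ, |u r - ((b ((r+1)*(s+1)):ℝ))/((r+1)*(s+1))| ≤ (C0:ℝ)/(r+1) := by
      intro r s
      have hm := hmul (s+1) (r+1)
      have hpos : (0:ℝ) < ((r:ℝ)+1) := by positivity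
      have hpos2 : (0:ℝ) < ((s:ℝ)+1) := by positivity
      have e1 : ((r+1)*(s+1) : ℕ) = (s+1)*(r+1) := by ring
      rw [e1]
      have : u r - ((b ((s+1)*(r+1)):ℝ))/(((r:ℝ)+1)*((s:ℝ)+1)) =
          (((s+1) * b (r+1) - b ((s+1)*(r+1)) : ℤ) : ℝ) / (((r:ℝ)+1)*((s:ℝ)+1)) := by
        simp only [hudef]
        push_cast
        field_simp
      rw [this, abs_div, abs_of_pos (show (0:ℝ) < ((r:ℝ)+1)*((s:ℝ)+1) by positivity)]
      rw [div_le_div_iff₀ (by positivity) hpos]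
      have hm' : |((s:ℤ)+1) * b (r+1) - b ((s+1)*(r+1))| ≤ ((s:ℤ)+1) * C0 := by
        rw [abs_sub_comm]
        push_cast at hm ⊢
        exact hm
      have habs : |(((s+1) * b (r+1) - b ((s+1)*(r+1)) : ℤ) : ℝ)| ≤ ((s:ℝ)+1) * C0 := by
        rw [← Int.cast_abs]
        exact_mod_cast hm'
      have hC0R : (0:ℝ) ≤ (C0:ℝ) := by exact_mod_cast hC00
      nlinarith [habs, hpos, hpos2, hC0R]
    intro r s
    calc |u r - u s| ≤ |u r - ((b ((r+1)*(s+1)):ℝ))/((r+1)*(s+1))|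
          + |u s - ((b ((r+1)*(s+1)):ℝ))/((r+1)*(s+1))| := by
          have h3 := abs_sub_le (u r) (((b ((r+1)*(s+1)):ℝ))/((r+1)*(s+1))) (u s)
          rw [abs_sub_comm (((b ((r+1)*(s+1)):ℝ))/((r+1)*(s+1))) (u s)] at h3
          exact h3
      _ ≤ (C0:ℝ)/(r+1) + (C0:ℝ)/(s+1) := by
          gcongr
          · exact key r s
          · have h4 := key s r
            rw [show ((s+1)*(r+1) : ℕ) = ((r+1)*(s+1) : ℕ) by ring,
              mul_comm ((s:ℝ)+1)] at h4
            exact h4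
  have hC0R : (0:ℝ) ≤ (C0:ℝ) := by exact_mod_cast hC00
  have hten : Filter.Tendsto (fun N : ℕ => 2*(C0:ℝ)/(N+1)) Filter.atTop (nhds 0) := by
    have h0 := tendsto_one_div_add_atTop_nhds_zero_nat.const_mul (2*(C0:ℝ))
    simp only [mul_zero] at h0
    refine h0.congr (fun n => ?_)
    field_simp
  have hCauchy : CauchySeq u := by
    apply cauchySeq_of_le_tendsto_0 (fun N : ℕ => 2*(C0:ℝ)/((N:ℝ)+1)) _ hten
    intro n m N hn hm
    rw [Real.dist_eq]
    calc |u n - u m| ≤ (C0:ℝ)/(n+1) + (C0:ℝ)/(m+1) := hu n m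
      _ ≤ (C0:ℝ)/(N+1) + (C0:ℝ)/(N+1) := by
          gcongr <;> exact_mod_cast Nat.succ_le_succ ‹_›
      _ = 2*(C0:ℝ)/(N+1) := by ring
  obtain ⟨μ, hμ⟩ := cauchySeq_tendsto_of_complete hCauchy
  have hlim : ∀ r, |u r - μ| ≤ (C0:ℝ)/(r+1) := by
    intro r
    have h1 : Filter.Tendsto (fun s => |u r - u s|) Filter.atTop (nhds |u r - μ|) :=
      (Filter.Tendsto.sub tendsto_const_nhds hμ).abs
    have h2 : Filter.Tendsto (fun s : ℕ => (C0:ℝ)/(r+1) + (C0:ℝ)/(s+1)) Filter.atTop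
        (nhds ((C0:ℝ)/(r+1) + 0)) := by
      apply Filter.Tendsto.add tendsto_const_nhds
      have h0 := tendsto_one_div_add_atTop_nhds_zero_nat.const_mul ((C0:ℝ))
      simp only [mul_zero] at h0
      refine h0.congr (fun n => ?_)
      field_simp
    have h3 := le_of_tendsto_of_tendsto' h1 h2 (fun s => hu r s)
    simpa using h3
  have hbr : ∀ r : ℕ, |(b r : ℝ) - μ * r| ≤ (C0:ℝ) := by
    intro r
    rcases r with _ | r'
    · simpa [hb0] using hC0R
    · have hl := hlim r'
      have hpos : (0:ℝ) < (r':ℝ)+1 := by positivity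
      simp only [hudef] at hl
      have e : (b (r'+1):ℝ) - μ * ((r'+1:ℕ):ℝ) =
          ((b (r'+1):ℝ)/((r':ℝ)+1) - μ) * ((r':ℝ)+1) := by
        push_cast
        field_simp
      rw [e, abs_mul, abs_of_pos hpos]
      calc |(b (r'+1):ℝ)/((r':ℝ)+1) - μ| * ((r':ℝ)+1)
          ≤ ((C0:ℝ)/((r':ℝ)+1)) * ((r':ℝ)+1) :=
            mul_le_mul_of_nonneg_right hl (le_of_lt hpos)
        _ = (C0:ℝ) := by field_simp
  refine ⟨μ, ?_⟩
  intro m r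
  have hA' : |((h (m+r) - h m : ℤ) : ℝ) - (b r : ℝ)| ≤ (C0:ℝ) := by
    have := hA m r
    have h5 : |((h (m+r) - h m - b r : ℤ) : ℝ)| ≤ (C0:ℝ) := by exact_mod_cast this
    push_cast at h5 ⊢
    exact h5
  calc |((h (m+r) - h m : ℤ) : ℝ) - μ * r|
      ≤ |((h (m+r) - h m : ℤ) : ℝ) - (b r : ℝ)| + |(b r : ℝ) - μ * r| :=
        abs_sub_le _ _ _
    _ ≤ (C0:ℝ) + (C0:ℝ) := add_le_add hA' (hbr r)
    _ = 2 * ((M * (4*K+1) : ℤ) : ℝ) := by rw [← hC0def]; ring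

lemma list_sum_range (f : ℕ → ℤ) (n : ℕ) :
    ((List.range n).map f).sum = ∑ i ∈ Finset.range n, f i := rfl

lemma abs_list_sum (l : List ℤ) : |l.sum| ≤ (l.map (fun x => |x|)).sum := by
  induction l with
  | nil => simp
  | cons a l ih =>
      simp only [List.sum_cons, List.map_cons]
      exact (abs_add_le a l.sum).trans (by linarith)

lemma list_abs_sum_nonneg (l : List ℤ) : 0 ≤ (l.map (fun x => |x|)).sum := by
  induction l with
  | nil => simp
  | cons a l ih => simp only [List.map_cons, List.sum_cons]; positivity

lemma abs_take_sum (l : List ℤ) (j : ℕ) :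
    |(l.take j).sum| ≤ (l.map (fun x => |x|)).sum := by
  refine (abs_list_sum _).trans ?_
  have e : (l.map (fun x => |x|)) = ((l.take j).map (fun x => |x|))
      ++ ((l.drop j).map (fun x => |x|)) := by
    rw [← List.map_append, List.take_append_drop]
  rw [e, List.sum_append]
  have := list_abs_sum_nonneg (l.drop j)
  linarith

lemma phiPrefix_succ (φ : ℤ → List ℤ) (ω : ℕ → ℤ) (m : ℕ) :
    phiPrefix φ ω (m+1) = phiPrefix φ ω m ++ φ (ω m) := by
  simp [phiPrefix, List.range_succ]

lemma phiPrefix_length (φ : ℤ → List ℤ) (ω : ℕ → ℤ) (m : ℕ) :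
    (phiPrefix φ ω m).length = ∑ i ∈ Finset.range m, (φ (ω i)).length := by
  induction m with
  | zero => simp [phiPrefix]
  | succ m ih => rw [phiPrefix_succ, List.length_append, ih, Finset.sum_range_succ]

lemma phiPrefix_sum (φ : ℤ → List ℤ) (ω : ℕ → ℤ) (m : ℕ) :
    (phiPrefix φ ω m).sum = ∑ i ∈ Finset.range m, (φ (ω i)).sum := by
  induction m with
  | zero => simp [phiPrefix]
  | succ m ih => rw [phiPrefix_succ, List.sum_append, ih, Finset.sum_range_succ]

lemma count_as_sum (t : ℤ) (l : List ℤ) :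
    ((l.map fun x => if x = t then (1:ℤ) else 0)).sum = (l.count t : ℤ) := by
  induction l with
  | nil => simp
  | cons a l ih =>
      simp only [List.map_cons, List.sum_cons, List.count_cons, ih]
      by_cases h : a = t
      · simp [h]; ring
      · simp [h]

lemma multiset_eq_sum_counts (S : Finset ℤ) (l : List ℤ) (h : ∀ x ∈ l, x ∈ S) :
    ∑ t ∈ S, (l.count t) • ({t} : Multiset ℤ) = (↑l : Multiset ℤ) := by
  ext x
  rw [Multiset.count_sum']
  simp only [Multiset.count_nsmul, Multiset.count_singleton]
  by_cases hx : x ∈ S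
  · rw [Finset.sum_eq_single x (fun t _ ht => by simp [Ne.symm ht]) (fun h' => absurd hx h')]
    simp [Multiset.coe_count]
  · rw [Finset.sum_eq_zero (fun t ht => by
      have : x ≠ t := fun he => hx (he ▸ ht)
      simp [this])]
    rw [eq_comm, Multiset.coe_count]
    exact_mod_cast List.count_eq_zero.mpr (fun hm => hx (h x hm))

lemma ind_prefix (t : ℤ) (ω : ℕ → ℤ) (n : ℕ) :
    phiPrefix (fun s => [if s = t then (1:ℤ) else 0]) ω n
      = (List.range n).map (fun i => if ω i = t then (1:ℤ) else 0) := by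
  induction n with
  | zero => simp [phiPrefix]
  | succ n ih => rw [phiPrefix_succ, ih, List.range_succ, List.map_append]; simp

lemma sum_range_add' (f : ℕ → ℤ) (m r : ℕ) :
    ∑ i ∈ Finset.range (m+r), f i = ∑ i ∈ Finset.range m, f i + ∑ i ∈ Finset.range r, f (m+i) := by
  exact Finset.sum_range_add f m r

lemma multiset_map_factor (g : ℤ → ℤ) (ω : ℕ → ℤ) (m r : ℕ) :
    (Multiset.map g (↑((List.range r).map (fun i => ω (m+i))) : Multiset ℤ)).sum
      = ∑ i ∈ Finset.range r, g (ω (m+i)) := by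
  rw [Multiset.map_coe, Multiset.sum_coe, List.map_map]
  rfl

lemma abs_map_natAbs (l : List ℤ) :
    (l.map (fun x => |x|)).sum = (((l.map Int.natAbs).sum : ℕ) : ℤ) := by
  induction l with
  | nil => simp
  | cons a l ih =>
      simp only [List.map_cons, List.sum_cons, ih]
      push_cast
      rw [Int.abs_eq_natAbs]


/-- ω has bounded abelian complexity iff every non-erasing morphism maps ω to a word
with bounded additive complexity. -/
theorem stmt15 (S : Finset ℤ) (ω : ℕ → ℤ) (hω : ∀ i : ℕ, ω i ∈ S) :
    BoundedAbelianComplexity ω ↔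
      ∀ φ : ℤ → List ℤ, (∀ s ∈ S, φ s ≠ []) →
        ∀ ω' : ℕ → ℤ, IsImage φ ω ω' → BoundedAddComplexity ω' := by
  classical
  constructor
  · -- forward: bounded abelian complexity implies all images have bounded additive complexity
    rintro ⟨M, hM⟩ φ hφ ω' him
    set Λ : ℕ → ℕ := fun m => (phiPrefix φ ω m).length with hΛdef
    set G : ℕ → ℤ := fun m => (phiPrefix φ ω m).sum with hGdef
    set K0 : ℕ := S.sup (fun s => (φ s).length) with hK0def
    set A0 : ℕ := S.sup (fun s => ((φ s).map Int.natAbs).sum) with hA0def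
    set Sq : ℕ → ℤ := fun q => ∑ i ∈ Finset.range q, ω' i with hSqdef
    have hL1 : ∀ i : ℕ, 1 ≤ (φ (ω i)).length :=
      fun i => List.length_pos_iff.mpr (hφ _ (hω i))
    have hLK : ∀ i : ℕ, (φ (ω i)).length ≤ K0 :=
      fun i => Finset.le_sup (f := fun s => (φ s).length) (hω i)
    have habs : ∀ i : ℕ, ∀ j : ℕ, |((φ (ω i)).take j).sum| ≤ (A0:ℤ) := by
      intro i j
      refine (abs_take_sum _ j).trans ?_
      rw [abs_map_natAbs]
      exact_mod_cast Finset.le_sup (f := fun s => ((φ s).map Int.natAbs).sum) (hω i)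
    have hΛsum : ∀ m, Λ m = ∑ i ∈ Finset.range m, (φ (ω i)).length :=
      fun m => phiPrefix_length φ ω m
    have hΛsucc : ∀ m, Λ (m+1) = Λ m + (φ (ω m)).length := by
      intro m
      show (phiPrefix φ ω (m+1)).length = _
      rw [phiPrefix_succ, List.length_append]
    have hGsucc : ∀ m, G (m+1) = G m + (φ (ω m)).sum := by
      intro m
      show (phiPrefix φ ω (m+1)).sum = _
      rw [phiPrefix_succ, List.sum_append]
    have hΛge : ∀ m, m ≤ Λ m := by
      intro m
      rw [hΛsum]
      have := Finset.sum_le_sum (f := fun _ : ℕ => 1)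
        (g := fun i => (φ (ω i)).length) (s := Finset.range m) (fun i _ => hL1 i)
      simpa using this
    have hΛmono : Monotone Λ := by
      intro a b hab
      rw [hΛsum, hΛsum]
      exact Finset.sum_le_sum_of_subset (Finset.range_subset_range.mpr hab)
    have hΛadd : ∀ m r, Λ (m+r) = Λ m + ∑ i ∈ Finset.range r, (φ (ω (m+i))).length := by
      intro m r
      rw [hΛsum, hΛsum, Finset.sum_range_add]
    have hGadd : ∀ m r, G (m+r) = G m + ∑ i ∈ Finset.range r, (φ (ω (m+i))).sum := by
      intro m r
      show (phiPrefix φ ω (m+r)).sum = (phiPrefix φ ω m).sum + _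
      rw [phiPrefix_sum, phiPrefix_sum, Finset.sum_range_add]
    -- decomposition of positions
    have hdec : ∀ q : ℕ, ∃ m j : ℕ, j < (φ (ω m)).length ∧ q = Λ m + j := by
      intro q
      set P : ℕ → Prop := fun m => Λ m ≤ q with hPdef
      have hP0 : P 0 := by
        show Λ 0 ≤ q
        rw [hΛsum]
        simp
      have hPm : P (Nat.findGreatest P q) := Nat.findGreatest_spec (Nat.zero_le q) hP0
      set m := Nat.findGreatest P q with hmdef
      have hPm' : Λ m ≤ q := hPm
      have hless : q < Λ (m+1) := by
        by_cases hc : m + 1 ≤ q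
        · have h5 := Nat.findGreatest_is_greatest (show m < m+1 by omega) hc
          rw [hPdef] at h5
          omega
        · have h6 := hΛge (m+1)
          omega
      have h7 := hΛsucc m
      refine ⟨m, q - Λ m, ?_, by omega⟩
      have h8 : q < Λ m + (φ (ω m)).length := by rw [← h7]; exact hless
      omega
    -- partial sums of ω'
    have hSq : ∀ m j : ℕ, j ≤ (φ (ω m)).length →
        Sq (Λ m + j) = G m + ((φ (ω m)).take j).sum := by
      intro m j hj
      have hN : Λ m + j ≤ Λ (m+1) := by have := hΛsucc m; omega
      have e1 : Sq (Λ m + j) = ((List.range (Λ m + j)).map ω').sum :=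
        (list_sum_range ω' _).symm
      have e2 : (List.range (Λ m + j)).map ω' = (phiPrefix φ ω (m+1)).take (Λ m + j) := by
        rw [him (m+1), ← List.map_take, List.take_range]
        congr 1
        rw [min_eq_left hN]
      rw [e1, e2, phiPrefix_succ, List.take_append]
      have h3 : (phiPrefix φ ω m).take (Λ m + j) = phiPrefix φ ω m :=
        List.take_of_length_le (by show Λ m ≤ Λ m + j; omega)
      have h4 : Λ m + j - (phiPrefix φ ω m).length = j := by
        show Λ m + j - Λ m = j; omega
      rw [h3, h4, List.sum_append]
    -- quasi-morphism bounds
    have hcardΛ : ∀ r : ℕ, 1 ≤ r → ∃ T' : Finset ℤ, T'.card ≤ M ∧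
        ∀ m, ((Λ (m+r) : ℤ) - (Λ m : ℤ)) ∈ T' := by
      intro r hr
      obtain ⟨T, hTc, hTm⟩ := hM r hr
      refine ⟨T.image (fun μs => (Multiset.map (fun s => ((φ s).length : ℤ)) μs).sum),
        (Finset.card_image_le).trans hTc, fun m => ?_⟩
      have hfac : Factor ω ((List.range r).map (fun i => ω (m+i))) :=
        ⟨m, by rw [List.length_map, List.length_range]⟩
      have hmem := hTm _ hfac (by simp)
      refine Finset.mem_image.mpr ⟨_, hmem, ?_⟩
      rw [multiset_map_factor]
      have e := hΛadd m r
      rw [e]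
      push_cast
      ring
    have hcardG : ∀ r : ℕ, 1 ≤ r → ∃ T' : Finset ℤ, T'.card ≤ M ∧
        ∀ m, (G (m+r) - G m) ∈ T' := by
      intro r hr
      obtain ⟨T, hTc, hTm⟩ := hM r hr
      refine ⟨T.image (fun μs => (Multiset.map (fun s => (φ s).sum) μs).sum),
        (Finset.card_image_le).trans hTc, fun m => ?_⟩
      have hfac : Factor ω ((List.range r).map (fun i => ω (m+i))) :=
        ⟨m, by rw [List.length_map, List.length_range]⟩
      have hmem := hTm _ hfac (by simp)
      refine Finset.mem_image.mpr ⟨_, hmem, ?_⟩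
      rw [multiset_map_factor]
      rw [hGadd m r]
      ring
    have hstepΛ : ∀ m, |((fun m => (Λ m : ℤ)) (m+1)) - (fun m => (Λ m : ℤ)) m| ≤ (K0:ℤ) := by
      intro m
      have h1 := hΛsucc m
      have h2 := hLK m
      show |((Λ (m+1) : ℤ)) - (Λ m : ℤ)| ≤ (K0:ℤ)
      rw [abs_le]
      omega
    have hstepG : ∀ m, |G (m+1) - G m| ≤ (A0:ℤ) := by
      intro m
      have h1 := hGsucc m
      have h2 := habs m (φ (ω m)).length
      rw [List.take_length] at h2
      rw [h1]
      simpa using h2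
    obtain ⟨μl, hμl⟩ := quasi (fun m => (Λ m : ℤ)) M (K0:ℤ) hstepΛ hcardΛ
    obtain ⟨μg, hμg⟩ := quasi G M (A0:ℤ) hstepG hcardG
    set CL : ℝ := 2 * ((M * (4*(K0:ℤ)+1) : ℤ) : ℝ) with hCLdef
    set CG : ℝ := 2 * ((M * (4*(A0:ℤ)+1) : ℤ) : ℝ) with hCGdef
    have hCL0 : 0 ≤ CL := by rw [hCLdef]; positivity
    have hCG0 : 0 ≤ CG := by rw [hCGdef]; positivity
    have hμl' : ∀ m r : ℕ, |((Λ (m+r) : ℝ)) - (Λ m : ℝ) - μl * r| ≤ CL := by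
      intro m r
      have := hμl m r
      push_cast at this ⊢
      convert this using 2 <;> ring
    have hμg' : ∀ m r : ℕ, |((G (m+r) : ℝ)) - (G m : ℝ) - μg * r| ≤ CG := by
      intro m r
      have := hμg m r
      push_cast at this ⊢
      convert this using 2 <;> ring
    -- μl ≥ 1
    have hμl1 : (1:ℝ) ≤ μl := by
      by_contra hcon
      push_neg at hcon
      have hpos : 0 < 1 - μl := by linarith
      obtain ⟨r, hrr⟩ := exists_nat_gt ((CL + 1)/(1 - μl))
      have h2 : (r:ℝ) ≤ (Λ r : ℝ) := by exact_mod_cast hΛge r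
      have hΛ0 : Λ 0 = 0 := by rw [hΛsum]; simp
      have h1 := hμl' 0 r
      rw [Nat.zero_add, hΛ0] at h1
      push_cast at h1
      rw [abs_le] at h1
      rw [div_lt_iff₀ hpos] at hrr
      nlinarith [h1.1, h1.2, h2, hrr, hCL0]
    -- representation of factor sums
    have hrep : ∀ p n : ℕ, ∃ (m1 r : ℕ) (t1 t2 : ℤ),
        |t1| ≤ (A0:ℤ) ∧ |t2| ≤ (A0:ℤ) ∧
        Sq (p+n) - Sq p = (G (m1+r) - G m1) + (t2 - t1) ∧
        |(n:ℝ) - μl * r| ≤ CL + K0 := by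
      intro p n
      obtain ⟨m1, j1, hj1, hp⟩ := hdec p
      obtain ⟨m2, j2, hj2, hpn⟩ := hdec (p+n)
      have e1 : Sq p = G m1 + ((φ (ω m1)).take j1).sum := by
        rw [hp]; exact hSq m1 j1 (le_of_lt hj1)
      have e2 : Sq (p+n) = G m2 + ((φ (ω m2)).take j2).sum := by
        rw [hpn]; exact hSq m2 j2 (le_of_lt hj2)
      have hm12 : m1 ≤ m2 := by
        by_contra hc
        push_neg at hc
        have h3 := hΛmono (show m2+1 ≤ m1 by omega)
        have h4 := hΛsucc m2
        omega
      refine ⟨m1, m2 - m1, ((φ (ω m1)).take j1).sum, ((φ (ω m2)).take j2).sum,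
        habs m1 j1, habs m2 j2, ?_, ?_⟩
      · rw [e1, e2, show m1 + (m2 - m1) = m2 by omega]
        ring
      · have hq := hμl' m1 (m2 - m1)
        rw [show m1 + (m2 - m1) = m2 by omega] at hq
        have e4 : (Λ m2 : ℝ) - (Λ m1 : ℝ) = (n:ℝ) + j1 - j2 := by
          have : (Λ m2 : ℤ) - (Λ m1 : ℤ) = (n:ℤ) + j1 - j2 := by omega
          exact_mod_cast this
        have hj1K : (j1:ℝ) ≤ (K0:ℝ) := by
          exact_mod_cast le_trans (le_of_lt hj1) (hLK m1)
        have hj2K : (j2:ℝ) ≤ (K0:ℝ) := by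
          exact_mod_cast le_trans (le_of_lt hj2) (hLK m2)
        have hj10 : (0:ℝ) ≤ j1 := by positivity
        have hj20 : (0:ℝ) ≤ j2 := by positivity
        rw [e4] at hq
        rw [abs_le] at hq ⊢
        constructor <;> linarith [hq.1, hq.2]
    set W : ℝ := |μg| * (2*(CL + (K0:ℝ))) + 2*CG + 4*(A0:ℝ) with hWdef
    have main : ∀ n p q : ℕ,
        |((((Sq (p+n) - Sq p) - (Sq (q+n) - Sq q)) : ℤ) : ℝ)| ≤ W := by
      intro n p q
      obtain ⟨m1, r1, t1, t2, ht1, ht2, hD1, hn1⟩ := hrep p n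
      obtain ⟨m3, r2, u1, u2, hu1, hu2, hD2, hn2⟩ := hrep q n
      have hg1 := hμg' m1 r1
      have hg2 := hμg' m3 r2
      -- |r1 - r2| small
      have hr12 : |(r1:ℝ) - r2| ≤ 2*(CL + K0) := by
        have h1 : |μl*(r1:ℝ) - μl*r2| ≤ 2*(CL+K0) := by
          rw [abs_le] at hn1 hn2 ⊢
          constructor <;> linarith [hn1.1, hn1.2, hn2.1, hn2.2]
        calc |(r1:ℝ) - r2| ≤ |μl*(r1:ℝ) - μl*r2| := by
              rw [show μl*(r1:ℝ) - μl*r2 = μl * ((r1:ℝ) - r2) by ring, abs_mul]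
              nlinarith [le_abs_self μl, abs_nonneg ((r1:ℝ) - (r2:ℝ))]
          _ ≤ 2*(CL+K0) := h1
      have hprod : |μg*(r1:ℝ) - μg*r2| ≤ |μg| * (2*(CL+(K0:ℝ))) := by
        rw [show μg*(r1:ℝ) - μg*r2 = μg * ((r1:ℝ) - r2) by ring, abs_mul]
        exact mul_le_mul_of_nonneg_left hr12 (abs_nonneg μg)
      have hcast : ((((Sq (p+n) - Sq p) - (Sq (q+n) - Sq q)) : ℤ) : ℝ)
          = (((G (m1+r1) : ℝ) - G m1 - μg*r1) - ((G (m3+r2) : ℝ) - G m3 - μg*r2))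
            + (μg*(r1:ℝ) - μg*r2) + ((t2:ℝ) - t1) - ((u2:ℝ) - u1) := by
        rw [hD1, hD2]
        push_cast
        ring
      have ht1' : |(t1:ℝ)| ≤ (A0:ℝ) := by exact_mod_cast (by exact_mod_cast ht1 : ((|t1|:ℤ):ℝ) ≤ ((A0:ℤ):ℝ))
      have ht2' : |(t2:ℝ)| ≤ (A0:ℝ) := by exact_mod_cast (by exact_mod_cast ht2 : ((|t2|:ℤ):ℝ) ≤ ((A0:ℤ):ℝ))
      have hu1' : |(u1:ℝ)| ≤ (A0:ℝ) := by exact_mod_cast (by exact_mod_cast hu1 : ((|u1|:ℤ):ℝ) ≤ ((A0:ℤ):ℝ))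
      have hu2' : |(u2:ℝ)| ≤ (A0:ℝ) := by exact_mod_cast (by exact_mod_cast hu2 : ((|u2|:ℤ):ℝ) ≤ ((A0:ℤ):ℝ))
      rw [hcast]
      rw [abs_le] at hg1 hg2 hprod ht1' ht2' hu1' hu2' ⊢
      rw [hWdef]
      constructor <;> linarith
    -- conclude bounded additive complexity
    set Wn : ℕ := ⌈W⌉₊ with hWndef
    refine ⟨2*Wn+1, fun n hn => ?_⟩
    refine ⟨Finset.Icc (Sq (0+n) - Sq 0 - Wn) (Sq (0+n) - Sq 0 + Wn), ?_, ?_⟩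
    · rw [Int.card_Icc]
      simp only [show Sq (0+n) - Sq 0 + (Wn:ℤ) + 1 - (Sq (0+n) - Sq 0 - Wn) = 2*(Wn:ℤ)+1 by ring]
      omega
    · intro B hB hlen
      obtain ⟨m, hm⟩ := hB
      rw [hlen] at hm
      have hsum : B.sum = Sq (m+n) - Sq m := by
        rw [hm, list_sum_range]
        have h0 : Sq (m+n) = Sq m + ∑ i ∈ Finset.range n, ω' (m+i) :=
          Finset.sum_range_add ω' m n
        show ∑ i ∈ Finset.range n, ω' (m+i) = _
        omega
      have h9 : ((|((Sq (m+n) - Sq m) - (Sq (0+n) - Sq 0))| : ℤ) : ℝ) ≤ ((Wn:ℕ):ℝ) := by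
        rw [Int.cast_abs]
        exact (main n m 0).trans (Nat.le_ceil _)
      have h10 : |((Sq (m+n) - Sq m) - (Sq (0+n) - Sq 0))| ≤ (Wn:ℤ) := by exact_mod_cast h9
      rw [Finset.mem_Icc, hsum]
      rw [abs_le] at h10
      omega
  · -- backward: use indicator morphisms
    intro H
    have key : ∀ t : ℤ, ∃ Mt : ℕ, ∀ n : ℕ, 1 ≤ n → ∃ T : Finset ℤ, T.card ≤ Mt ∧
        ∀ m : ℕ, (∑ i ∈ Finset.range n, if ω (m+i) = t then (1:ℤ) else 0) ∈ T := by
      intro t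
      have him : IsImage (fun s => [if s = t then (1:ℤ) else 0]) ω
          (fun i => if ω i = t then (1:ℤ) else 0) := by
        intro n
        rw [ind_prefix t ω n]
        simp
      have hne : ∀ s ∈ S, (fun s => [if s = t then (1:ℤ) else 0]) s ≠ [] := by
        intro s _
        simp
      obtain ⟨Mt, hMt⟩ := H _ hne _ him
      refine ⟨Mt, fun n hn => ?_⟩
      obtain ⟨T, hT, hmem⟩ := hMt n hn
      refine ⟨T, hT, fun m => ?_⟩
      have hfac : Factor (fun i => if ω i = t then (1:ℤ) else 0)
          ((List.range n).map (fun i => if ω (m+i) = t then (1:ℤ) else 0)) :=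
        ⟨m, by rw [List.length_map, List.length_range]⟩
      have h8 := hmem _ hfac (by simp)
      rw [list_sum_range] at h8
      exact h8
    choose Mt hMt using key
    refine ⟨∏ t ∈ S, Mt t, fun n hn => ?_⟩
    choose Tf hTcard hTmem using fun t : ℤ => hMt t n hn
    refine ⟨(S.pi (fun t => Tf t)).image
      (fun c => ∑ t ∈ S.attach, ((c t.1 t.2).toNat) • ({t.1} : Multiset ℤ)), ?_, ?_⟩
    · refine (Finset.card_image_le).trans ?_
      rw [Finset.card_pi]
      exact Finset.prod_le_prod' (fun t _ => hTcard t)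
    · intro B hB hlen
      obtain ⟨m, hm⟩ := hB
      rw [hlen] at hm
      have hBS : ∀ x ∈ B, x ∈ S := by
        intro x hx
        rw [hm] at hx
        simp only [List.mem_map, List.mem_range] at hx
        obtain ⟨i, -, rfl⟩ := hx
        exact hω _
      refine Finset.mem_image.mpr ⟨fun t _ => (B.count t : ℤ),
        Finset.mem_pi.mpr (fun t ht => ?_), ?_⟩
      · have hcount : (B.count t : ℤ)
            = ∑ i ∈ Finset.range n, (if ω (m+i) = t then (1:ℤ) else 0) := by
          rw [← count_as_sum t B]
          conv_lhs => rw [hm]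
          rw [List.map_map]
          exact list_sum_range _ n
        rw [hcount]
        exact hTmem t m
      · calc ∑ t ∈ S.attach, ((B.count t.1 : ℤ)).toNat • ({t.1} : Multiset ℤ)
            = ∑ t ∈ S.attach, (B.count t.1) • ({t.1} : Multiset ℤ) := by
              apply Finset.sum_congr rfl
              intro t _
              rw [Int.toNat_natCast]
          _ = ∑ t ∈ S, (B.count t) • ({t} : Multiset ℤ) :=
              Finset.sum_attach S (fun t => (B.count t) • ({t} : Multiset ℤ))
          _ = ↑B := multiset_eq_sum_counts S B hBS
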